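/- The set of periodic points of the tent map f₂(x) = min(2x, 2(1−x)) is dense in [0,1] with the Euclidean topology. -/

import Mathlib

/-- The full tent map on [0,1]: f₂(x) = min(2x, 2(1-x)). -/
noncomputable def tentMap (x : Set.Icc (0:ℝ) 1) : Set.Icc (0:ℝ) 1 :=
  ⟨min (2 * x) (2 * (1 - x)), by
    constructor
    · exact le_min (by nlinarith [x.2.1]) (by nlinarith [x.2.2])
    · rcases le_or_gt (x : ℝ) (1/2) with h | h
      · exact le_trans (min_le_left _ _) (by linarith)
      · exact le_trans (min_le_right _ _) (by linarith)⟩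

/-- Fold the real line onto [0,1] (period 2, tent-shaped). -/
noncomputable def tfold (y : ℝ) : ℝ := |y - 2 * round (y / 2)|

lemma tfold_mem (y : ℝ) : tfold y ∈ Set.Icc (0:ℝ) 1 := by
  constructor
  · exact abs_nonneg _
  · have h := abs_sub_round (y / 2)
    have he : y - 2 * round (y/2) = 2 * (y/2 - round (y/2)) := by ring
    rw [tfold, he, abs_mul, abs_two]
    linarith

lemma tentMap_tfold (y : ℝ) : tentMap ⟨tfold y, tfold_mem y⟩ = ⟨tfold (2*y), tfold_mem _⟩ := by
  apply Subtype.ext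
  show min (2 * tfold y) (2 * (1 - tfold y)) = tfold (2*y)
  set r : ℤ := round (y/2) with hr
  have hu : y - 2*(r:ℝ) = y - 2*(r:ℝ) := rfl
  set u : ℝ := y - 2*(r:ℝ) with hudef
  have hu2 : |u| ≤ 1 := by
    have h := abs_sub_round (y/2)
    have he : u = 2*(y/2 - (round (y/2) : ℝ)) := by rw [hudef, hr]; ring
    rw [he, abs_mul, abs_two]; linarith
  have hum : -1 ≤ u ∧ u ≤ 1 := abs_le.mp hu2
  have hf : tfold y = |u| := rfl
  have hround : round ((2*y)/2) = round u + 2*r := by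
    have he : (2*y)/2 = u + ((2*r : ℤ) : ℝ) := by push_cast; rw [hudef]; ring
    rw [he, round_add_intCast]
  have hf2 : tfold (2*y) = |2*u - 2*(round u : ℝ)| := by
    rw [tfold, hround]
    congr 1
    push_cast
    rw [hudef]
    ring
  rw [hf, hf2]
  rcases lt_or_ge u (-(1/2)) with h1 | h1
  · have hru : round u = -1 := by
      rw [round_eq]
      have : ⌊u + 1/2⌋ = (-1 : ℤ) := by
        apply Int.floor_eq_iff.mpr
        constructor <;> push_cast <;> linarith [hum.1]
      exact this
    rw [hru]
    rw [abs_of_nonpos (by linarith : u ≤ 0)]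
    push_cast
    rw [abs_of_nonneg (by linarith [hum.1] : (0:ℝ) ≤ 2*u - 2*(-1))]
    rw [min_eq_right (by linarith)]
    ring
  · rcases lt_or_ge u (1/2) with h2 | h2
    · have hru : round u = 0 := by
        rw [round_eq]
        have : ⌊u + 1/2⌋ = (0 : ℤ) := by
          apply Int.floor_eq_iff.mpr
          constructor <;> push_cast <;> linarith
        exact this
      rw [hru]
      push_cast
      rw [mul_zero, sub_zero]
      rw [abs_mul, abs_two]
      rw [min_eq_left (by cases abs_cases u <;> linarith)]
    · have hru : round u = 1 := by
        rw [round_eq]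
        have : ⌊u + 1/2⌋ = (1 : ℤ) := by
          apply Int.floor_eq_iff.mpr
          constructor <;> push_cast <;> linarith [hum.2]
        exact this
      rw [hru]
      rw [abs_of_nonneg (by linarith : (0:ℝ) ≤ u)]
      push_cast
      rw [abs_of_nonpos (by linarith [hum.2] : 2*u - 2*1 ≤ 0)]
      rw [min_eq_right (by linarith)]
      ring

lemma tentMap_iter_tfold (n : ℕ) (y : ℝ) :
    tentMap^[n] ⟨tfold y, tfold_mem y⟩ = ⟨tfold (2^n * y), tfold_mem _⟩ := by
  induction n generalizing y with
  | zero =>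
    apply Subtype.ext
    show tfold y = tfold (2^0 * y)
    norm_num
  | succ n ih =>
    rw [Function.iterate_succ_apply, tentMap_tfold, ih]
    apply Subtype.ext
    show tfold (2^n * (2*y)) = tfold (2^(n+1) * y)
    congr 1
    ring

lemma tfold_self {x : ℝ} (h0 : 0 ≤ x) (h1 : x ≤ 1) : tfold x = x := by
  rcases lt_or_eq_of_le h1 with h | h
  · have hr : round (x/2) = 0 := by
      rw [round_eq]
      have : ⌊x/2 + 1/2⌋ = (0 : ℤ) := by
        apply Int.floor_eq_iff.mpr
        constructor <;> push_cast <;> linarith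
      exact this
    rw [tfold, hr]
    push_cast
    rw [mul_zero, sub_zero, abs_of_nonneg h0]
  · subst h
    rw [tfold]
    have hr : round ((1:ℝ)/2) = 1 := by
      rw [round_eq]
      norm_num
    rw [hr]
    norm_num

lemma tfold_add_two_int (y : ℝ) (m : ℤ) : tfold (y + 2*m) = tfold y := by
  rw [tfold, tfold]
  have he : (y + 2*m)/2 = y/2 + (m:ℝ) := by ring
  rw [he, round_add_intCast]
  congr 1
  push_cast
  ring

lemma periodic_aux (q j : ℕ) (hqodd : Odd q) (hq1 : 1 ≤ q)
    (x : Set.Icc (0:ℝ) 1) (hx : (x:ℝ) = 2*j/q) :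
    ∃ n : ℕ, 1 ≤ n ∧ tentMap^[n] x = x := by
  have htot : 0 < q.totient := Nat.totient_pos.mpr hq1
  refine ⟨q.totient, htot, ?_⟩
  have hcop : Nat.Coprime 2 q := by
    rw [Nat.coprime_two_left]
    exact hqodd
  have hmod : 2 ^ q.totient ≡ 1 [MOD q] := Nat.ModEq.pow_totient hcop
  have h1le : 1 ≤ 2 ^ q.totient := Nat.one_le_two_pow
  have hdvd : q ∣ 2 ^ q.totient - 1 := (Nat.modEq_iff_dvd' h1le).mp hmod.symm
  obtain ⟨m, hm⟩ := hdvd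
  have h2 : (2:ℝ) ^ q.totient = (q:ℝ) * (m:ℝ) + 1 := by
    have : 2 ^ q.totient = q * m + 1 := by omega
    exact_mod_cast this
  have hx0 := x.2.1
  have hx1 := x.2.2
  have hq0 : (0:ℝ) < q := by exact_mod_cast hq1
  have hxf : (⟨tfold x, tfold_mem _⟩ : Set.Icc (0:ℝ) 1) = x :=
    Subtype.ext (tfold_self hx0 hx1)
  calc tentMap^[q.totient] x = tentMap^[q.totient] ⟨tfold x, tfold_mem _⟩ := by rw [hxf]
    _ = ⟨tfold (2^q.totient * x), tfold_mem _⟩ := tentMap_iter_tfold _ _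
    _ = x := by
        apply Subtype.ext
        show tfold (2^q.totient * x) = (x:ℝ)
        have he : (2:ℝ)^q.totient * x = (x:ℝ) + 2 * ((j*m : ℤ) : ℝ) := by
          rw [h2, hx]
          push_cast
          field_simp
          ring
        rw [he, tfold_add_two_int, tfold_self hx0 hx1]

/-- The periodic points of the tent map are dense in [0,1] with the Euclidean
(subspace) topology. -/
theorem tentMap_periodic_points_dense :
    Dense {x : Set.Icc (0:ℝ) 1 | ∃ n : ℕ, 1 ≤ n ∧ tentMap^[n] x = x} := by
  rw [Metric.dense_iff]
  intro x ε hε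
  obtain ⟨N, hN⟩ := exists_nat_gt (2/ε)
  set q : ℕ := 2*N+1 with hqdef
  have hq1 : 1 ≤ q := by omega
  have hqodd : Odd q := ⟨N, by omega⟩
  have hq0 : (0:ℝ) < q := by exact_mod_cast hq1
  have hx0 := x.2.1
  have hx1 := x.2.2
  set j : ℕ := ⌊(x:ℝ) * q / 2⌋.toNat with hjdef
  have hfl : (j:ℝ) = (⌊(x:ℝ) * q / 2⌋ : ℝ) := by
    rw [hjdef]
    exact_mod_cast Int.toNat_of_nonneg (Int.floor_nonneg.mpr (by positivity))
  have h1 : (j:ℝ) ≤ (x:ℝ)*q/2 := hfl ▸ Int.floor_le _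
  have h2 : (x:ℝ)*q/2 < (j:ℝ) + 1 := hfl ▸ Int.lt_floor_add_one _
  have hjq : (2*j:ℝ) ≤ q := by nlinarith
  have hmem : (2*(j:ℝ)/q : ℝ) ∈ Set.Icc (0:ℝ) 1 := by
    constructor
    · positivity
    · rw [div_le_one hq0]; push_cast at hjq ⊢; linarith
  refine ⟨⟨2*(j:ℝ)/q, hmem⟩, ⟨?_, ?_⟩⟩
  · rw [Metric.mem_ball]
    have hd : dist (⟨2*(j:ℝ)/q, hmem⟩ : Set.Icc (0:ℝ) 1) x = |2*(j:ℝ)/q - (x:ℝ)| := by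
      rw [Subtype.dist_eq, Real.dist_eq]
    rw [hd]
    have hle : 2*(j:ℝ)/q ≤ (x:ℝ) := by
      rw [div_le_iff₀ hq0]; linarith
    have hlt : (x:ℝ) - 2*(j:ℝ)/q < 2/q := by
      rw [sub_lt_iff_lt_add, ← add_div, lt_div_iff₀ hq0]
      nlinarith
    have heps : 2/(q:ℝ) < ε := by
      rw [div_lt_iff₀ hq0]
      have hNq : (2:ℝ)/ε < q := by
        have : (N:ℝ) < q := by exact_mod_cast (by omega : N < q)
        linarith
      rw [div_lt_iff₀ hε] at hNq
      linarith
    rw [abs_sub_comm, abs_of_nonneg (by linarith)]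
    linarith
  · exact periodic_aux q j hqodd hq1 _ rfl
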